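/- Let α > 1. Define ψ₁(α,y) = y(1-y)^(α-1) / (1-(1-y)^α) for y ∈ (0,1). Then ψ₁(α,·) is strictly decreasing in y on the interval (0,1); that is, for all 0 < y₁ < y₂ < 1, ψ₁(α,y₁) > ψ₁(α,y₂). -/

import Mathlib

open Real Set

private lemma psi1_bern {t α : ℝ} (ht : 0 < t) (ht1 : t < 1) (hα : 1 < α) :
    1 + α * (t - 1) < t ^ α := by
  have h := one_add_mul_self_lt_rpow_one_add (s := t - 1) (by linarith) (by linarith) hα
  simpa using h

private lemma psi1_g_deriv {α : ℝ} {t : ℝ} (ht : 0 < t) (ht1 : t < 1) :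
    HasDerivAt (fun t : ℝ => (t ^ (1 - α) - t) / (1 - t))
      ((((1 - α) * t ^ (-α) - 1) * (1 - t) - (t ^ (1 - α) - t) * (-1)) / (1 - t) ^ 2) t := by
  have h1 : HasDerivAt (fun t : ℝ => t ^ (1 - α)) ((1 - α) * t ^ (1 - α - 1)) t :=
    Real.hasDerivAt_rpow_const (Or.inl ht.ne')
  have h2 : HasDerivAt (fun t : ℝ => t ^ (1 - α) - t) ((1 - α) * t ^ (-α) - 1) t := by
    have := h1.sub (hasDerivAt_id t)
    simpa [show (1 : ℝ) - α - 1 = -α by ring, Pi.sub_def, id] using this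
  have h3 : HasDerivAt (fun t : ℝ => 1 - t) (-1) t := by
    simpa using (hasDerivAt_id t).const_sub 1
  exact h2.div h3 (by linarith)

private lemma psi1_g_anti {α : ℝ} (hα : 1 < α) :
    StrictAntiOn (fun t : ℝ => (t ^ (1 - α) - t) / (1 - t)) (Ioo (0:ℝ) 1) := by
  apply strictAntiOn_of_deriv_neg (convex_Ioo 0 1)
  · intro t ht
    exact ((psi1_g_deriv ht.1 ht.2).continuousAt).continuousWithinAt
  · intro t ht
    rw [interior_Ioo] at ht
    obtain ⟨h0, h1⟩ := ht
    rw [(psi1_g_deriv h0 h1).deriv]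
    apply div_neg_of_neg_of_pos _ (pow_pos (by linarith : (0:ℝ) < 1 - t) 2)
    -- show numerator is negative
    have htα : (0:ℝ) < t ^ α := Real.rpow_pos_of_pos h0 α
    have ha : t ^ (-α) * t ^ α = 1 := by
      rw [← Real.rpow_add h0]; simp
    have hb : t ^ (1 - α) * t ^ α = t := by
      rw [← Real.rpow_add h0]; simp
    have hbern := psi1_bern h0 h1 hα
    nlinarith [mul_pos htα htα]

private lemma psi1_eq {α : ℝ} (hα : 1 < α) {y : ℝ} (hy0 : 0 < y) (hy1 : y < 1) :
    y * (1 - y) ^ (α - 1) / (1 - (1 - y) ^ α)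
      = (((1 - y) ^ (1 - α) - (1 - y)) / (1 - (1 - y)))⁻¹ := by
  set t := 1 - y with hty
  have ht0 : 0 < t := by simp [hty]; linarith
  have ht1 : t < 1 := by simp [hty]; linarith
  have h1tα : 0 < 1 - t ^ α :=
    sub_pos.mpr (Real.rpow_lt_one ht0.le ht1 (by linarith))
  have hkey : (t ^ (1 - α) - t) * t ^ (α - 1) = 1 - t ^ α := by
    have h1 : t ^ (1 - α) * t ^ (α - 1) = 1 := by
      rw [← Real.rpow_add ht0]; simp
    have h2 : t * t ^ (α - 1) = t ^ α := by
      nth_rewrite 1 [← Real.rpow_one t]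
      rw [← Real.rpow_add ht0]; ring_nf
    rw [sub_mul, h1, h2]
  have htα1 : (0:ℝ) < t ^ (α - 1) := Real.rpow_pos_of_pos ht0 _
  have hnum : 0 < t ^ (1 - α) - t := by
    nlinarith
  have h1t : 1 - t = y := by simp [hty]
  rw [h1t]
  rw [inv_div, div_eq_div_iff h1tα.ne' hnum.ne']
  linear_combination y * hkey

theorem psi1_strictly_decreasing (α : ℝ) (hα : 1 < α) :
    ∀ y₁ y₂ : ℝ, 0 < y₁ → y₁ < y₂ → y₂ < 1 →
      y₁ * (1 - y₁) ^ (α - 1) / (1 - (1 - y₁) ^ α) >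
        y₂ * (1 - y₂) ^ (α - 1) / (1 - (1 - y₂) ^ α) := by
  intro y₁ y₂ h1 h12 h2
  have hy11 : y₁ < 1 := h12.trans h2
  have hy20 : 0 < y₂ := h1.trans h12
  have ht1 : (1 - y₁) ∈ Ioo (0:ℝ) 1 := ⟨by linarith, by linarith⟩
  have ht2 : (1 - y₂) ∈ Ioo (0:ℝ) 1 := ⟨by linarith, by linarith⟩
  have hlt : (1 - y₂) < (1 - y₁) := by linarith
  have hg := psi1_g_anti hα ht2 ht1 hlt
  simp only at hg
  -- positivity of g at 1 - y₁
  have hpos : 0 < ((1 - y₁) ^ (1 - α) - (1 - y₁)) / (1 - (1 - y₁)) := by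
    set t := 1 - y₁
    have ht0 : 0 < t := ht1.1
    have htlt : t < 1 := ht1.2
    have h1tα : 0 < 1 - t ^ α :=
      sub_pos.mpr (Real.rpow_lt_one ht0.le htlt (by linarith))
    have hkey : (t ^ (1 - α) - t) * t ^ (α - 1) = 1 - t ^ α := by
      have ha : t ^ (1 - α) * t ^ (α - 1) = 1 := by
        rw [← Real.rpow_add ht0]; simp
      have hb : t * t ^ (α - 1) = t ^ α := by
        nth_rewrite 1 [← Real.rpow_one t]
        rw [← Real.rpow_add ht0]; ring_nf
      rw [sub_mul, ha, hb]
    have htα1 : (0:ℝ) < t ^ (α - 1) := Real.rpow_pos_of_pos ht0 _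
    have hnum : 0 < t ^ (1 - α) - t := by nlinarith
    apply div_pos hnum (by linarith)
  rw [psi1_eq hα h1 hy11, psi1_eq hα hy20 h2]
  exact inv_strictAnti₀ hpos hg
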